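/- (Borel–Cantelli degeneracy criterion) Let r, k ≥ 1 and let α₁,…,α_r be reals with 1,α₁,…,α_r linearly independent over ℚ. Let (m_ν), ζ_ν, M_ν be the best-approximation data for (α₁,…,α_r). Suppose the series Σ_ν M_{ν+1}^{r+k}·(log M_{ν+1})^{δ_k}·ζ_ν converges, where δ_k = 1 if k = 1 and δ_k = 0 if k ≥ 2. Then for Lebesgue-almost every (β₁,…,β_k) ∈ [0,1]^k there exists ν₀ such that for all ν ≥ ν₀ and all integer points (m₀,…,m_{r+k}) with max_{1≤j≤r+k}|m_j| ≤ M_{ν+1} and (m_{r+1},…,m_{r+k}) ≠ 0, one has |m₀ + m₁α₁ + … + m_rα_r + m_{r+1}β₁ + … + m_{r+k}β_k| ≥ ζ_ν. -/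

import Mathlib

open Finset MeasureTheory
open scoped ENNReal NNReal

/-- The value of the linear form: `ζ(m) = m₀ + Σ mⱼ αⱼ`. -/
def zetaF {r : ℕ} (α : Fin r → ℝ) (m₀ : ℤ) (m : Fin r → ℤ) : ℝ :=
  (m₀ : ℝ) + ∑ j, (m j : ℝ) * α j

/-- `M(m) = max_{1 ≤ j ≤ r} |m_j|` (as a natural number). -/
def Mnorm {r : ℕ} (m : Fin r → ℤ) : ℕ :=
  Finset.univ.sup fun j => (m j).natAbs

/-- `m = (m₀, m₁, …, m_r)` is a best approximation (in the sense of linear form)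
for `α₁, …, α_r`. -/
def IsBestApprox {r : ℕ} (α : Fin r → ℝ) (m₀ : ℤ) (m : Fin r → ℤ) : Prop :=
  m ≠ 0 ∧ 0 < zetaF α m₀ m ∧
    ∀ (n₀ : ℤ) (n : Fin r → ℤ), n ≠ 0 → Mnorm n ≤ Mnorm m →
      zetaF α m₀ m ≤ |zetaF α n₀ n|

/-- `(mz ν, m ν)` is the sequence of all best approximations, ordered by
strictly increasing `M_ν`. -/
def IsBASeq {r : ℕ} (α : Fin r → ℝ) (mz : ℕ → ℤ) (m : ℕ → Fin r → ℤ) : Prop :=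
  (∀ ν, IsBestApprox α (mz ν) (m ν)) ∧
  StrictMono (fun ν => Mnorm (m ν)) ∧
  ∀ (p₀ : ℤ) (p : Fin r → ℤ), IsBestApprox α p₀ p → ∃ ν, p₀ = mz ν ∧ p = m ν

/-- `1, α₁, …, α_r` are linearly independent over `ℚ`. -/
def LinIndepWithOne {r : ℕ} (α : Fin r → ℝ) : Prop :=
  LinearIndependent ℚ (Fin.cons (1 : ℝ) α : Fin (r + 1) → ℝ)

/-- `(α₁, …, α_r)` is a `ψ`-singular tuple (in the sense of linear form). -/
def IsPsiSingular {r : ℕ} (α : Fin r → ℝ) (ψ : ℝ → ℝ) : Prop :=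
  ∀ T : ℝ, 1 < T → ∃ n : Fin r → ℤ, n ≠ 0 ∧ (∀ j, (|n j| : ℝ) ≤ T) ∧
    ∃ n₀ : ℤ, |zetaF α n₀ n| < ψ T

lemma lem1D (q : ℤ) (hq : q ≠ 0) (c ζ Z : ℝ) (hζ : 0 ≤ ζ) (hZ : ζ ≤ Z) :
    volume {x : ℝ | x ∈ Set.Icc (0:ℝ) 1 ∧ ∃ n₀ : ℤ, |(n₀:ℝ) + c + q * x| < ζ} ≤
      ENNReal.ofReal ((4 * Z + 6) * ζ) := by
  set Q : ℝ := |(q:ℝ)| with hQdef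
  have hQ1 : (1:ℝ) ≤ Q := by
    have h1 : (1:ℤ) ≤ |q| := Int.one_le_abs hq
    calc (1:ℝ) ≤ ((|q| : ℤ) : ℝ) := by exact_mod_cast h1
    _ = Q := by push_cast; rfl
  have hQ0 : (0:ℝ) < Q := lt_of_lt_of_le one_pos hQ1
  set S : Finset ℤ := Finset.Icc ⌈-c - ζ - Q⌉ ⌊-c + ζ + Q⌋ with hSdef
  have cover : {x : ℝ | x ∈ Set.Icc (0:ℝ) 1 ∧ ∃ n₀ : ℤ, |(n₀:ℝ) + c + q * x| < ζ} ⊆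
      ⋃ n₀ ∈ S, Set.Ioo ((-(n₀:ℝ) - c)/q - ζ/Q) ((-(n₀:ℝ) - c)/q + ζ/Q) := by
    rintro x ⟨hx, n₀, habs⟩
    have hx1 : |x| ≤ 1 := by
      rw [abs_le]; exact ⟨by linarith [hx.1], hx.2⟩
    have hqx : |(q:ℝ) * x| ≤ Q := by
      rw [abs_mul]
      calc Q * |x| ≤ Q * 1 := by nlinarith
      _ = Q := mul_one Q
    have hmem : n₀ ∈ S := by
      have h1 : |(n₀:ℝ) + c| < ζ + Q := by
        have := abs_add_le ((n₀:ℝ) + c + q * x) (-(q*x))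
        simp only [abs_neg] at this
        calc |(n₀:ℝ) + c| = |(n₀:ℝ) + c + q*x + -(q*x)| := by ring_nf
        _ ≤ |(n₀:ℝ) + c + q*x| + |(q:ℝ)*x| := this
        _ < ζ + Q := by linarith
      rw [abs_lt] at h1
      rw [hSdef, Finset.mem_Icc]
      constructor
      · exact Int.ceil_le.2 (by push_cast; linarith [h1.1])
      · exact Int.le_floor.2 (by push_cast; linarith [h1.2])
    have hq' : (q:ℝ) ≠ 0 := Int.cast_ne_zero.2 hq
    have hdist : |x - (-(n₀:ℝ) - c)/q| < ζ/Q := by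
      rw [lt_div_iff₀ hQ0]
      have heq : |x - (-(n₀:ℝ) - c)/q| * Q = |(n₀:ℝ) + c + q * x| := by
        rw [hQdef, ← abs_mul]
        congr 1
        field_simp
        ring
      rw [heq]; exact habs
    refine Set.mem_biUnion hmem ?_
    rw [Set.mem_Ioo]
    rw [abs_lt] at hdist
    constructor <;> linarith [hdist.1, hdist.2]
  calc volume {x : ℝ | x ∈ Set.Icc (0:ℝ) 1 ∧ ∃ n₀ : ℤ, |(n₀:ℝ) + c + q * x| < ζ}
      ≤ volume (⋃ n₀ ∈ S, Set.Ioo ((-(n₀:ℝ) - c)/q - ζ/Q) ((-(n₀:ℝ) - c)/q + ζ/Q)) :=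
        measure_mono cover
    _ ≤ ∑ n₀ ∈ S, volume (Set.Ioo ((-(n₀:ℝ) - c)/q - ζ/Q) ((-(n₀:ℝ) - c)/q + ζ/Q)) :=
        measure_biUnion_finset_le S _
    _ = ∑ n₀ ∈ S, ENNReal.ofReal (2*(ζ/Q)) := by
        refine Finset.sum_congr rfl fun n₀ _ => ?_
        rw [Real.volume_Ioo]
        congr 1; ring
    _ = S.card • ENNReal.ofReal (2*(ζ/Q)) := Finset.sum_const _
    _ = (S.card : ℝ≥0∞) * ENNReal.ofReal (2*(ζ/Q)) := by rw [nsmul_eq_mul]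
    _ = ENNReal.ofReal ((S.card : ℝ) * (2*(ζ/Q))) := by
        rw [← ENNReal.ofReal_natCast, ← ENNReal.ofReal_mul (by positivity)]
    _ ≤ ENNReal.ofReal ((4*Z+6)*ζ) := by
        apply ENNReal.ofReal_le_ofReal
        have hfl := Int.floor_le (-c + ζ + Q)
        have hce := Int.le_ceil (-c - ζ - Q)
        have hcard : (S.card : ℝ) ≤ 2*ζ + 2*Q + 1 := by
          have hc1 : (S.card : ℤ) = (⌊-c + ζ + Q⌋ + 1 - ⌈-c - ζ - Q⌉) ⊔ 0 := by
            rw [hSdef, Int.card_Icc, Int.toNat_eq_max]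
          calc (S.card : ℝ) = ((((⌊-c + ζ + Q⌋ + 1 - ⌈-c - ζ - Q⌉) ⊔ 0 : ℤ) : ℤ) : ℝ) := by
                exact_mod_cast congrArg (fun z : ℤ => (z : ℝ)) hc1
          _ ≤ 2*ζ + 2*Q + 1 := by
              push_cast
              apply max_le <;> linarith
        have h1 : ζ/Q ≤ ζ := div_le_self hζ hQ1
        have h2 : Q * (ζ/Q) = ζ := mul_div_cancel₀ ζ (ne_of_gt hQ0)
        have hd0 : 0 ≤ ζ/Q := div_nonneg hζ (le_of_lt hQ0)
        have hA : (S.card:ℝ)*(2*(ζ/Q)) ≤ (2*ζ+2*Q+1)*(2*(ζ/Q)) :=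
          mul_le_mul_of_nonneg_right hcard (by positivity)
        have hB : ζ*(ζ/Q) ≤ Z*ζ := by
          calc ζ*(ζ/Q) ≤ ζ*Z := mul_le_mul_of_nonneg_left (h1.trans hZ) hζ
          _ = Z*ζ := mul_comm _ _
        nlinarith [hA, hB, h2, h1, hd0]

lemma lemSlab (k' : ℕ) (p : Fin (k'+1) → ℤ) (hp : p ≠ 0) (c ζ Z : ℝ) (hζ : 0 ≤ ζ) (hZ : ζ ≤ Z) :
    volume ({β : Fin (k'+1) → ℝ | ∃ n₀ : ℤ, |(n₀:ℝ) + c + ∑ i, (p i : ℝ) * β i| < ζ}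
      ∩ Set.univ.pi fun _ => Set.Icc (0:ℝ) 1) ≤ ENNReal.ofReal ((4*Z+6) * ζ) := by
  obtain ⟨i₀, hi₀⟩ := Function.ne_iff.1 hp
  simp only [Pi.zero_apply] at hi₀
  set A : Set (Fin (k'+1) → ℝ) :=
    {β : Fin (k'+1) → ℝ | ∃ n₀ : ℤ, |(n₀:ℝ) + c + ∑ i, (p i : ℝ) * β i| < ζ}
      ∩ Set.univ.pi fun _ => Set.Icc (0:ℝ) 1 with hAdef
  have hA : MeasurableSet A := by
    apply MeasurableSet.inter
    · have : {β : Fin (k'+1) → ℝ | ∃ n₀ : ℤ, |(n₀:ℝ) + c + ∑ i, (p i : ℝ) * β i| < ζ} =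
        ⋃ n₀ : ℤ, {β : Fin (k'+1) → ℝ | |(n₀:ℝ) + c + ∑ i, (p i : ℝ) * β i| < ζ} := by
        ext β; simp
      rw [this]
      refine MeasurableSet.iUnion fun n₀ => ?_
      exact measurableSet_lt (by fun_prop) measurable_const
    · exact MeasurableSet.univ_pi fun _ => measurableSet_Icc
  set e := MeasurableEquiv.piFinSuccAbove (fun _ : Fin (k'+1) => ℝ) i₀ with hedef
  have hmp := volume_preserving_piFinSuccAbove (fun _ : Fin (k'+1) => ℝ) i₀
  rw [← (MeasurePreserving.symm e hmp).measure_preimage hA.nullMeasurableSet]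
  have hA' : MeasurableSet (e.symm ⁻¹' A) := e.symm.measurableSet_preimage.2 hA
  rw [show (volume : Measure (ℝ × (Fin k' → ℝ))) = (volume : Measure ℝ).prod volume from rfl,
    Measure.prod_apply_symm hA']
  have key : ∀ y : Fin k' → ℝ, volume ((fun x => (x, y)) ⁻¹' (e.symm ⁻¹' A)) ≤
      (Set.univ.pi fun _ : Fin k' => Set.Icc (0:ℝ) 1).indicator
        (fun _ => ENNReal.ofReal ((4*Z+6) * ζ)) y := by
    intro y
    have hsymm : ∀ x : ℝ, e.symm (x, y) = i₀.insertNth x y := fun x => rfl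
    by_cases hy : y ∈ Set.univ.pi fun _ : Fin k' => Set.Icc (0:ℝ) 1
    · rw [Set.indicator_of_mem hy]
      refine le_trans (measure_mono ?_)
        (lem1D (p i₀) hi₀ (c + ∑ j, (p (i₀.succAbove j) : ℝ) * y j) ζ Z hζ hZ)
      intro x hx
      simp only [Set.mem_preimage, hsymm, hAdef, Set.mem_inter_iff, Set.mem_setOf_eq,
        Set.mem_pi, Set.mem_univ, forall_true_left] at hx
      obtain ⟨⟨n₀, hn₀⟩, hbox⟩ := hx
      constructor
      · have := hbox i₀
        rwa [Fin.insertNth_apply_same] at this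
      · refine ⟨n₀, ?_⟩
        rw [Fin.sum_univ_succAbove _ i₀] at hn₀
        simp only [Fin.insertNth_apply_same, Fin.insertNth_apply_succAbove] at hn₀
        have heq : (n₀:ℝ) + (c + ∑ j, (p (i₀.succAbove j) : ℝ) * y j) + (p i₀ : ℝ) * x =
            (n₀:ℝ) + c + ((p i₀ : ℝ) * x + ∑ j, (p (i₀.succAbove j) : ℝ) * y j) := by ring
        rw [heq]
        exact hn₀
    · rw [Set.indicator_of_notMem hy]
      have hempty : ((fun x => (x, y)) ⁻¹' (e.symm ⁻¹' A)) = ∅ := by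
        ext x
        simp only [Set.mem_preimage, hsymm, hAdef, Set.mem_inter_iff, Set.mem_setOf_eq,
          Set.mem_pi, Set.mem_univ, forall_true_left, Set.mem_empty_iff_false, iff_false,
          not_and]
        intro _ hbox
        exact hy fun j _ => by
          have := hbox (i₀.succAbove j)
          rwa [Fin.insertNth_apply_succAbove] at this
      rw [hempty, measure_empty]
  calc ∫⁻ y, volume ((fun x => (x, y)) ⁻¹' (e.symm ⁻¹' A)) ∂volume
      ≤ ∫⁻ y, (Set.univ.pi fun _ : Fin k' => Set.Icc (0:ℝ) 1).indicator
          (fun _ => ENNReal.ofReal ((4*Z+6) * ζ)) y ∂volume := lintegral_mono key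
    _ = ENNReal.ofReal ((4*Z+6) * ζ) * volume (Set.univ.pi fun _ : Fin k' => Set.Icc (0:ℝ) 1) := by
        rw [lintegral_indicator (MeasurableSet.univ_pi fun _ => measurableSet_Icc)]
        simp [Measure.restrict_apply MeasurableSet.univ]
    _ ≤ ENNReal.ofReal ((4*Z+6) * ζ) := by
        rw [volume_pi_pi]
        simp [Real.volume_Icc]

def BdSet {r k : ℕ} (α : Fin r → ℝ) (ζ : ℝ) (np : (Fin r → ℤ) × (Fin k → ℤ)) :
    Set (Fin k → ℝ) :=
  {β | ∃ n₀ : ℤ, |(n₀:ℝ) + ∑ j, (np.1 j : ℝ) * α j + ∑ i, (np.2 i : ℝ) * β i| < ζ}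

noncomputable def Fset (r k M : ℕ) : Finset ((Fin r → ℤ) × (Fin k → ℤ)) :=
  ((Fintype.piFinset fun _ : Fin r => Finset.Icc (-(M : ℤ)) (M : ℤ)) ×ˢ
    (Fintype.piFinset fun _ : Fin k => Finset.Icc (-(M : ℤ)) (M : ℤ))).filter
    (fun np => np.2 ≠ 0)

lemma mem_Fset {r k M : ℕ} {np : (Fin r → ℤ) × (Fin k → ℤ)} :
    np ∈ Fset r k M ↔ (∀ j, (np.1 j).natAbs ≤ M) ∧ (∀ i, (np.2 i).natAbs ≤ M) ∧ np.2 ≠ 0 := by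
  simp only [Fset, Finset.mem_filter, Finset.mem_product, Fintype.mem_piFinset,
    Finset.mem_Icc, and_assoc]
  constructor
  · rintro ⟨h1, h2, h3⟩
    exact ⟨fun j => by have := h1 j; omega, fun i => by have := h2 i; omega, h3⟩
  · rintro ⟨h1, h2, h3⟩
    exact ⟨fun j => by have := h1 j; omega, fun i => by have := h2 i; omega, h3⟩

lemma card_Fset (r k M : ℕ) (hM : 1 ≤ M) :
    ((Fset r k M).card : ℝ) ≤ 3 ^ (r + k) * (M : ℝ) ^ (r + k) := by
  have h1 : (Fset r k M).card ≤ (2*M+1) ^ (r + k) := by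
    calc (Fset r k M).card ≤
        ((Fintype.piFinset fun _ : Fin r => Finset.Icc (-(M : ℤ)) (M : ℤ)) ×ˢ
          (Fintype.piFinset fun _ : Fin k => Finset.Icc (-(M : ℤ)) (M : ℤ))).card :=
        Finset.card_filter_le _ _
    _ = (2*M+1) ^ r * (2*M+1) ^ k := by
        rw [Finset.card_product, Fintype.card_piFinset, Fintype.card_piFinset]
        have hic : (Finset.Icc (-(M : ℤ)) (M : ℤ)).card = 2*M+1 := by
          rw [Int.card_Icc]; omega
        simp [hic]
    _ = (2*M+1) ^ (r + k) := (pow_add _ _ _).symm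
  have h2 : (2*M+1) ^ (r+k) ≤ 3^(r+k) * M^(r+k) := by
    rw [← mul_pow]
    exact Nat.pow_le_pow_left (by omega) _
  calc ((Fset r k M).card : ℝ) ≤ ((3^(r+k) * M^(r+k) : ℕ) : ℝ) := by
        exact_mod_cast h1.trans h2
  _ = 3 ^ (r + k) * (M : ℝ) ^ (r + k) := by push_cast; ring


set_option maxHeartbeats 4000000 in
/-- Borel–Cantelli degeneracy criterion. -/
theorem stmt8 (r k : ℕ) (hr : 1 ≤ r) (hk : 1 ≤ k) (α : Fin r → ℝ) (hα : LinIndepWithOne α)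
    (mz : ℕ → ℤ) (m : ℕ → Fin r → ℤ) (hBA : IsBASeq α mz m)
    (hsum : Summable fun ν => (Mnorm (m (ν + 1)) : ℝ) ^ (r + k) *
      (if k = 1 then Real.log (Mnorm (m (ν + 1))) else 1) * zetaF α (mz ν) (m ν)) :
    ∀ᵐ β : Fin k → ℝ ∂(volume.restrict (Set.univ.pi fun _ => Set.Icc (0 : ℝ) 1)),
      ∃ ν₀ : ℕ, ∀ ν ≥ ν₀, ∀ (n₀ : ℤ) (n : Fin r → ℤ) (p : Fin k → ℤ),
        (∀ j, (n j).natAbs ≤ Mnorm (m (ν + 1))) →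
        (∀ j, (p j).natAbs ≤ Mnorm (m (ν + 1))) → p ≠ 0 →
        zetaF α (mz ν) (m ν) ≤
          |(n₀ : ℝ) + ∑ j, (n j : ℝ) * α j + ∑ i, (p i : ℝ) * β i| := by
  classical
  obtain ⟨k', rfl⟩ : ∃ k', k = k' + 1 := ⟨k - 1, (Nat.succ_pred_eq_of_pos hk).symm⟩
  obtain ⟨hBA1, hBA2, -⟩ := hBA
  have hζpos : ∀ ν, 0 < zetaF α (mz ν) (m ν) := fun ν => (hBA1 ν).2.1
  set Z : ℝ := zetaF α (mz 0) (m 0) with hZdef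
  have hζZ : ∀ ν, zetaF α (mz ν) (m ν) ≤ Z := by
    intro ν
    have h := (hBA1 ν).2.2 (mz 0) (m 0) (hBA1 0).1 (hBA2.monotone (Nat.zero_le ν))
    rwa [abs_of_pos (hζpos 0)] at h
  have hM2 : ∀ ν, 2 ≤ Mnorm (m (ν+1)) := by
    intro ν
    have h0 : 1 ≤ Mnorm (m 0) := by
      obtain ⟨j, hj⟩ := Function.ne_iff.1 (hBA1 0).1
      simp only [Pi.zero_apply] at hj
      calc 1 ≤ (m 0 j).natAbs := Int.natAbs_pos.2 hj
      _ ≤ Mnorm (m 0) := Finset.le_sup (f := fun i => (m 0 i).natAbs) (Finset.mem_univ j)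
    have h1 : Mnorm (m 0) < Mnorm (m (ν+1)) := hBA2 (Nat.zero_lt_succ ν)
    omega
  set box : Set (Fin (k'+1) → ℝ) := Set.univ.pi fun _ => Set.Icc (0:ℝ) 1 with hboxdef
  have hboxMeas : MeasurableSet box := MeasurableSet.univ_pi fun _ => measurableSet_Icc
  set μ : Measure (Fin (k'+1) → ℝ) := volume.restrict box with hμdef
  set E : ℕ → Set (Fin (k'+1) → ℝ) := fun ν =>
    ⋃ np ∈ Fset r (k'+1) (Mnorm (m (ν+1))), BdSet α (zetaF α (mz ν) (m ν)) np with hEdef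
  set w : ℕ → ℝ := fun ν =>
    (if k' + 1 = 1 then Real.log (Mnorm (m (ν + 1))) else 1) with hwdef
  have hlog2pos : 0 < Real.log 2 := Real.log_pos (by norm_num)
  have hw : ∀ ν, Real.log 2 ≤ w ν := by
    intro ν
    show Real.log 2 ≤ if k' + 1 = 1 then Real.log ((Mnorm (m (ν + 1)) : ℕ) : ℝ) else 1
    split
    · apply Real.log_le_log (by norm_num)
      exact_mod_cast hM2 ν
    · have := Real.log_two_lt_d9
      linarith
  set C : ℝ := 3 ^ (r + (k'+1)) * (4*Z+6) / Real.log 2 with hCdef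
  have hZpos : 0 < Z := hζpos 0
  have hCpos : 0 < C := by positivity
  set s : ℕ → ℝ := fun ν => (Mnorm (m (ν + 1)) : ℝ) ^ (r + (k'+1)) * w ν *
    zetaF α (mz ν) (m ν) with hsdef
  have hEbound : ∀ ν, μ (E ν) ≤ ENNReal.ofReal (C * s ν) := by
    intro ν
    have step1 : μ (E ν) ≤
        ∑ np ∈ Fset r (k'+1) (Mnorm (m (ν+1))), μ (BdSet α (zetaF α (mz ν) (m ν)) np) :=
      measure_biUnion_finset_le _ _
    have step2 : ∀ np ∈ Fset r (k'+1) (Mnorm (m (ν+1))),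
        μ (BdSet α (zetaF α (mz ν) (m ν)) np) ≤
          ENNReal.ofReal ((4*Z+6) * zetaF α (mz ν) (m ν)) := by
      intro np hnp
      rw [hμdef, Measure.restrict_apply' hboxMeas]
      exact lemSlab k' np.2 (mem_Fset.1 hnp).2.2 (∑ j, (np.1 j : ℝ) * α j)
        (zetaF α (mz ν) (m ν)) Z (le_of_lt (hζpos ν)) (hζZ ν)
    calc μ (E ν) ≤ ∑ np ∈ Fset r (k'+1) (Mnorm (m (ν+1))),
          ENNReal.ofReal ((4*Z+6) * zetaF α (mz ν) (m ν)) :=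
        step1.trans (Finset.sum_le_sum step2)
    _ = ((Fset r (k'+1) (Mnorm (m (ν+1)))).card : ℝ≥0∞) *
          ENNReal.ofReal ((4*Z+6) * zetaF α (mz ν) (m ν)) := by
        rw [Finset.sum_const, nsmul_eq_mul]
    _ = ENNReal.ofReal (((Fset r (k'+1) (Mnorm (m (ν+1)))).card : ℝ) *
          ((4*Z+6) * zetaF α (mz ν) (m ν))) := by
        rw [← ENNReal.ofReal_natCast, ← ENNReal.ofReal_mul (by positivity)]
    _ ≤ ENNReal.ofReal (C * s ν) := by
        apply ENNReal.ofReal_le_ofReal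
        have hcard := card_Fset r (k'+1) (Mnorm (m (ν+1))) (by have := hM2 ν; omega)
        have hζν := hζpos ν
        have hMpow : (0:ℝ) ≤ (Mnorm (m (ν+1)) : ℝ) ^ (r + (k'+1)) := by positivity
        have h46 : (0:ℝ) < 4*Z+6 := by linarith
        calc ((Fset r (k'+1) (Mnorm (m (ν+1)))).card : ℝ) *
              ((4*Z+6) * zetaF α (mz ν) (m ν))
            ≤ (3 ^ (r + (k'+1)) * (Mnorm (m (ν+1)) : ℝ) ^ (r + (k'+1))) *
              ((4*Z+6) * zetaF α (mz ν) (m ν)) :=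
            mul_le_mul_of_nonneg_right hcard (by positivity)
        _ = (C * Real.log 2) * ((Mnorm (m (ν+1)) : ℝ) ^ (r + (k'+1)) *
              zetaF α (mz ν) (m ν)) := by
            rw [hCdef, div_mul_cancel₀ _ (ne_of_gt hlog2pos)]
            ring
        _ ≤ (C * w ν) * ((Mnorm (m (ν+1)) : ℝ) ^ (r + (k'+1)) *
              zetaF α (mz ν) (m ν)) := by
            apply mul_le_mul_of_nonneg_right _ (by positivity)
            exact mul_le_mul_of_nonneg_left (hw ν) (le_of_lt hCpos)
        _ = C * s ν := by rw [hsdef]; ring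
  have hsnonneg : ∀ ν, 0 ≤ C * s ν := by
    intro ν
    have : 0 ≤ s ν := by
      rw [hsdef]
      have := hw ν
      have := hζpos ν
      positivity
    positivity
  have htsum : (∑' ν, μ (E ν)) ≠ ⊤ := by
    refine ne_top_of_le_ne_top ?_ (ENNReal.tsum_le_tsum fun ν => hEbound ν)
    rw [← ENNReal.ofReal_tsum_of_nonneg hsnonneg (hsum.mul_left C)]
    exact ENNReal.ofReal_ne_top
  filter_upwards [MeasureTheory.ae_eventually_notMem htsum] with β hβ
  obtain ⟨ν₀, hν₀⟩ := Filter.eventually_atTop.1 hβ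
  refine ⟨ν₀, fun ν hν n₀ n p hn hp hp0 => ?_⟩
  by_contra hcon
  push_neg at hcon
  apply hν₀ ν hν
  rw [hEdef]
  have hmem : (n, p) ∈ Fset r (k'+1) (Mnorm (m (ν+1))) := mem_Fset.2 ⟨hn, hp, hp0⟩
  exact Set.mem_biUnion hmem (⟨n₀, hcon⟩ : β ∈ BdSet α (zetaF α (mz ν) (m ν)) (n, p))
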